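/- Suppose (P_0,...,P_n) is a nonnegative sequence with P_{l-1}/N_{l-1} ≤ e^{ε} P_l/N_l for 1 ≤ l ≤ n and Σ_l P_l = 1, where N_l = C(n,l)(m-1)^l. Then Σ_{l=0}^n l·P_l ≥ Σ_{l=0}^n l·N_l e^{-lε}/(1+(m-1)e^{-ε})^n = n(m-1)e^{-ε}/(1+(m-1)e^{-ε}). -/

import Mathlib

/-- If a nonnegative sequence `(P_0,…,P_n)` sums to one and satisfies
`P_{l-1}/N_{l-1} ≤ e^ε P_l/N_l` with `N_l = C(n,l)(m-1)^l`, then its mean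
`Σ l P_l` is at least the mean of the binomial-type distribution
`Q_l = N_l e^{-lε}/(1+(m-1)e^{-ε})^n`, namely `n(m-1)e^{-ε}/(1+(m-1)e^{-ε})`. -/
theorem sequence_mean_lower_bound (n m : ℕ) (hn : 1 ≤ n) (hm : 2 ≤ m)
    (ε : ℝ) (hε : 0 ≤ ε) (P : ℕ → ℝ)
    (hnn : ∀ l, l ≤ n → 0 ≤ P l)
    (hsum : ∑ l ∈ Finset.range (n + 1), P l = 1)
    (hratio : ∀ l, 1 ≤ l → l ≤ n →
      P (l - 1) / ((n.choose (l - 1) : ℝ) * ((m : ℝ) - 1) ^ (l - 1))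
        ≤ Real.exp ε * (P l / ((n.choose l : ℝ) * ((m : ℝ) - 1) ^ l))) :
    (∑ l ∈ Finset.range (n + 1), (l : ℝ) * P l)
      ≥ ∑ l ∈ Finset.range (n + 1),
          (l : ℝ) * ((n.choose l : ℝ) * ((m : ℝ) - 1) ^ l * Real.exp (-(l : ℝ) * ε)
            / (1 + ((m : ℝ) - 1) * Real.exp (-ε)) ^ n) ∧
    (∑ l ∈ Finset.range (n + 1),
        (l : ℝ) * ((n.choose l : ℝ) * ((m : ℝ) - 1) ^ l * Real.exp (-(l : ℝ) * ε)
          / (1 + ((m : ℝ) - 1) * Real.exp (-ε)) ^ n))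
      = (n : ℝ) * ((m : ℝ) - 1) * Real.exp (-ε) / (1 + ((m : ℝ) - 1) * Real.exp (-ε)) := by
  have hm1 : (1:ℝ) ≤ (m:ℝ) - 1 := by
    have : (2:ℝ) ≤ (m:ℝ) := by exact_mod_cast hm
    linarith
  set x : ℝ := ((m:ℝ) - 1) * Real.exp (-ε) with hx
  have hepos : (0:ℝ) < Real.exp (-ε) := Real.exp_pos _
  have hxpos : 0 < x := mul_pos (by linarith) hepos
  have h1x : (0:ℝ) < 1 + x := by linarith
  have h1xn : (0:ℝ) < (1 + x) ^ n := pow_pos h1x n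
  -- rewrite of the Q-numerator
  have hQform : ∀ l : ℕ, (n.choose l : ℝ) * ((m:ℝ) - 1) ^ l * Real.exp (-(l:ℝ) * ε)
      = (n.choose l : ℝ) * x ^ l := by
    intro l
    rw [hx, mul_pow, ← mul_assoc]
    congr 1
    rw [← Real.exp_nat_mul]
    congr 1
    ring
  -- binomial sum
  have hbin : ∀ N : ℕ, ∑ l ∈ Finset.range (N + 1), (N.choose l : ℝ) * x ^ l = (1 + x) ^ N := by
    intro N
    rw [add_comm (1:ℝ) x, add_pow]
    refine Finset.sum_congr rfl fun k _ => ?_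
    rw [one_pow]
    ring
  -- mean of the binomial-type sum
  have hmean : ∑ l ∈ Finset.range (n + 1), (l : ℝ) * ((n.choose l : ℝ) * x ^ l)
      = (n : ℝ) * x * (1 + x) ^ (n - 1) := by
    rw [Finset.sum_range_succ']
    simp only [Nat.cast_zero, zero_mul, mul_zero, add_zero]
    have key : ∀ i : ℕ, ((i + 1 : ℕ) : ℝ) * ((n.choose (i + 1) : ℝ) * x ^ (i + 1))
        = (n : ℝ) * x * (((n - 1).choose i : ℝ) * x ^ i) := by
      intro i
      have h := Nat.add_one_mul_choose_eq (n - 1) i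
      rw [Nat.sub_add_cancel hn] at h
      have hcast : (n : ℝ) * ((n - 1).choose i : ℝ) = (n.choose (i + 1) : ℝ) * ((i + 1 : ℕ) : ℝ) := by
        exact_mod_cast congrArg (Nat.cast : ℕ → ℝ) h
      push_cast at hcast ⊢
      linear_combination (-(x ^ (i + 1))) * hcast
    calc ∑ i ∈ Finset.range n, ((i + 1 : ℕ) : ℝ) * ((n.choose (i + 1) : ℝ) * x ^ (i + 1))
        = ∑ i ∈ Finset.range n, (n : ℝ) * x * (((n - 1).choose i : ℝ) * x ^ i) := by
          exact Finset.sum_congr rfl fun i _ => key i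
      _ = (n : ℝ) * x * ∑ i ∈ Finset.range n, (((n - 1).choose i : ℝ) * x ^ i) := by
          rw [Finset.mul_sum]
      _ = (n : ℝ) * x * (1 + x) ^ (n - 1) := by
          rw [← hbin (n - 1), Nat.sub_add_cancel hn]
  -- the second conjunct
  have hsecond : (∑ l ∈ Finset.range (n + 1),
        (l : ℝ) * ((n.choose l : ℝ) * ((m : ℝ) - 1) ^ l * Real.exp (-(l : ℝ) * ε)
          / (1 + x) ^ n))
      = (n : ℝ) * ((m : ℝ) - 1) * Real.exp (-ε) / (1 + x) := by
    have : ∀ l ∈ Finset.range (n + 1),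
        (l : ℝ) * ((n.choose l : ℝ) * ((m : ℝ) - 1) ^ l * Real.exp (-(l : ℝ) * ε) / (1 + x) ^ n)
        = (l : ℝ) * ((n.choose l : ℝ) * x ^ l) / (1 + x) ^ n := by
      intro l _
      rw [hQform l]; ring
    rw [Finset.sum_congr rfl this, ← Finset.sum_div, hmean]
    have hpow : (1 + x) ^ n = (1 + x) ^ (n - 1) * (1 + x) := by
      conv_lhs => rw [← Nat.sub_add_cancel hn]
      rw [pow_succ]
    rw [hpow]
    have h1 : (1 + x) ^ (n - 1) ≠ 0 := ne_of_gt (pow_pos h1x _)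
    field_simp
    ring
  -- set up Q and u
  set Q : ℕ → ℝ := fun l => (n.choose l : ℝ) * x ^ l / (1 + x) ^ n with hQ
  have hQpos : ∀ l, l ≤ n → 0 < Q l := by
    intro l hl
    have hc : 0 < (n.choose l : ℝ) := by
      exact_mod_cast Nat.choose_pos hl
    exact div_pos (mul_pos hc (pow_pos hxpos l)) h1xn
  have hQsum : ∑ l ∈ Finset.range (n + 1), Q l = 1 := by
    rw [hQ]
    simp only
    rw [← Finset.sum_div, hbin n, div_self (ne_of_gt h1xn)]
  set u : ℕ → ℝ := fun l => P l / Q l with hu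
  have hPuQ : ∀ l, l ≤ n → P l = u l * Q l := by
    intro l hl
    rw [hu]
    field_simp [ne_of_gt (hQpos l hl)]
  -- monotonicity of u
  have hustep : ∀ l, 1 ≤ l → l ≤ n → u (l - 1) ≤ u l := by
    intro l h1 h2
    have hform : ∀ j, j ≤ n → u j = (1 + x) ^ n * Real.exp ε ^ j *
        (P j / ((n.choose j : ℝ) * ((m:ℝ) - 1) ^ j)) := by
      intro j hj
      have hc : (0:ℝ) < (n.choose j : ℝ) := by exact_mod_cast Nat.choose_pos hj
      have hmj : (0:ℝ) < ((m:ℝ) - 1) ^ j := pow_pos (by linarith) j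
      have hE : (0:ℝ) < Real.exp ε ^ j := pow_pos (Real.exp_pos ε) j
      have hxe : x ^ j = ((m:ℝ) - 1) ^ j * (Real.exp ε ^ j)⁻¹ := by
        rw [hx, mul_pow, Real.exp_neg, inv_pow]
      rw [hu, hQ]
      simp only
      rw [hxe]
      field_simp
    have hl1 : l - 1 ≤ n := by omega
    rw [hform (l - 1) hl1, hform l h2]
    have hr := hratio l h1 h2
    have hpos : (0:ℝ) < (1 + x) ^ n * Real.exp ε ^ (l - 1) :=
      mul_pos h1xn (pow_pos (Real.exp_pos ε) _)
    have hle : Real.exp ε ^ l = Real.exp ε ^ (l - 1) * Real.exp ε := by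
      conv_lhs => rw [← Nat.sub_add_cancel h1]
      rw [pow_succ]
    rw [hle]
    calc (1 + x) ^ n * Real.exp ε ^ (l - 1) * (P (l - 1) / ((n.choose (l - 1) : ℝ) * ((m:ℝ) - 1) ^ (l - 1)))
        ≤ (1 + x) ^ n * Real.exp ε ^ (l - 1) * (Real.exp ε * (P l / ((n.choose l : ℝ) * ((m:ℝ) - 1) ^ l))) := by
          exact mul_le_mul_of_nonneg_left hr (le_of_lt hpos)
      _ = (1 + x) ^ n * (Real.exp ε ^ (l - 1) * Real.exp ε) * (P l / ((n.choose l : ℝ) * ((m:ℝ) - 1) ^ l)) := by ring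
  have hmono : ∀ j l, j ≤ l → l ≤ n → u j ≤ u l := by
    intro j l hjl hln
    induction l, hjl using Nat.le_induction with
    | base => exact le_refl _
    | succ l hl ih =>
      have h1 : u j ≤ u l := ih (by omega)
      have h2 : u l ≤ u (l + 1) := by
        have := hustep (l + 1) (by omega) hln
        simpa using this
      linarith
  -- tails are nonnegative
  have hsplit : ∀ k, k + 1 ≤ n + 1 →
      (∑ l ∈ Finset.range (k + 1), (P l - Q l)) + ∑ l ∈ Finset.Ico (k + 1) (n + 1), (P l - Q l) = 0 := by
    intro k hk
    rw [Finset.range_eq_Ico, Finset.sum_Ico_consecutive _ (Nat.zero_le _) hk, ← Finset.range_eq_Ico,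
      Finset.sum_sub_distrib, hsum, hQsum]
    ring
  have htail : ∀ k, 0 ≤ ∑ l ∈ Finset.Ico (k + 1) (n + 1), (P l - Q l) := by
    intro k
    by_cases hk : k + 1 ≤ n
    · by_cases hu1 : 1 ≤ u (k + 1)
      · apply Finset.sum_nonneg
        intro l hl
        rw [Finset.mem_Ico] at hl
        have hln : l ≤ n := by omega
        have : 1 ≤ u l := le_trans hu1 (hmono (k + 1) l hl.1 hln)
        rw [hPuQ l hln]
        nlinarith [hQpos l hln]
      · push_neg at hu1
        have hh := hsplit k (by omega)
        have hhead : (∑ l ∈ Finset.range (k + 1), (P l - Q l)) ≤ 0 := by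
          apply Finset.sum_nonpos
          intro l hl
          rw [Finset.mem_range] at hl
          have hln : l ≤ n := by omega
          have : u l ≤ u (k + 1) := hmono l (k + 1) (by omega) hk
          rw [hPuQ l hln]
          nlinarith [hQpos l hln]
        linarith
    · have : Finset.Ico (k + 1) (n + 1) = ∅ := by
        apply Finset.Ico_eq_empty
        omega
      rw [this, Finset.sum_empty]
  -- the summation swap
  have hswap : ∑ l ∈ Finset.range (n + 1), (l : ℝ) * (P l - Q l)
      = ∑ k ∈ Finset.range (n + 1), ∑ l ∈ Finset.Ico (k + 1) (n + 1), (P l - Q l) := by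
    rw [Finset.range_eq_Ico, Finset.sum_Ico_Ico_comm' 0 (n + 1) (fun _ l => P l - Q l)]
    refine Finset.sum_congr rfl fun l _ => ?_
    rw [Finset.sum_const, Nat.card_Ico, Nat.sub_zero, nsmul_eq_mul]
  have hineq : ∑ l ∈ Finset.range (n + 1), (l : ℝ) * Q l ≤ ∑ l ∈ Finset.range (n + 1), (l : ℝ) * P l := by
    have h0 : 0 ≤ ∑ l ∈ Finset.range (n + 1), (l : ℝ) * (P l - Q l) := by
      rw [hswap]
      exact Finset.sum_nonneg fun k _ => htail k
    have : ∑ l ∈ Finset.range (n + 1), (l : ℝ) * (P l - Q l)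
        = (∑ l ∈ Finset.range (n + 1), (l : ℝ) * P l) - ∑ l ∈ Finset.range (n + 1), (l : ℝ) * Q l := by
      rw [← Finset.sum_sub_distrib]
      exact Finset.sum_congr rfl fun l _ => by ring
    linarith [this ▸ h0]
  constructor
  · have heq : ∑ l ∈ Finset.range (n + 1),
        (l : ℝ) * ((n.choose l : ℝ) * ((m : ℝ) - 1) ^ l * Real.exp (-(l : ℝ) * ε) / (1 + x) ^ n)
        = ∑ l ∈ Finset.range (n + 1), (l : ℝ) * Q l := by
      refine Finset.sum_congr rfl fun l _ => ?_
      rw [hQform l, hQ]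
    rw [heq]
    exact hineq
  · rw [hsecond]
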